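/- Let K be a field, and let n ≥ 1 and d ≥ 1 be integers. Let λ_1,…,λ_d ∈ K[[x_1,…,x_n]] be formal power series. For each i ∈ {1,…,d}, let μ_i ∈ K[z_1,…,z_n][[x]] be the power series obtained from λ_i by substituting z_j·x for x_j for each j = 1,…,n, let g_i = y − μ_i ∈ K[z_1,…,z_n][[x]][y], and let ĝ_i = ∏_{j≠i} g_j. Then for every i ∈ {1,…,d} and every (j,k) ∈ ℕ², the coefficient of x^j y^k in ĝ_i · (∂g_i/∂x) is a polynomial in K[z_1,…,z_n] of total degree at most j+1, and the coefficient of x^j y^k in ĝ_i · (∂g_i/∂y) is a polynomial in K[z_1,…,z_n] of total degree at most j. -/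

import Mathlib

open MvPolynomial

/-- The power series in `K[z₁,…,zₙ][[x]]` obtained from a formal power series
`λ ∈ K[[x₁,…,xₙ]]` by substituting `zⱼ·x` for `xⱼ` for each `j`: the coefficient of
`x^m` is `∑_{|e| = m} (coeff of x^e in λ)·z^e ∈ K[z₁,…,zₙ]`. -/
noncomputable def substZX {K : Type*} [CommRing K] {n : ℕ}
    (lam : MvPowerSeries (Fin n) K) : PowerSeries (MvPolynomial (Fin n) K) :=
  PowerSeries.mk fun m =>
    ∑ e ∈ Finset.Nat.antidiagonalTuple n m,
      MvPolynomial.monomial (Finsupp.equivFunOnFinite.symm e)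
        (MvPowerSeries.coeff (Finsupp.equivFunOnFinite.symm e) lam)

/-- The formal partial derivative `∂/∂x` on `A[[x]][y]`, acting coefficientwise by the
formal derivative of power series. -/
noncomputable def pderivX {A : Type*} [CommRing A]
    (h : Polynomial (PowerSeries A)) : Polynomial (PowerSeries A) :=
  h.sum fun k c => Polynomial.monomial k (PowerSeries.derivativeFun c)

/-- The coefficient `[h, x^j y^k] ∈ A` of `x^j y^k` in `h ∈ A[[x]][y]`. -/
noncomputable def coeffXY {A : Type*} [CommRing A]
    (h : Polynomial (PowerSeries A)) (j k : ℕ) : A :=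
  PowerSeries.coeff j (h.coeff k)

section Aux

variable {K : Type*} [CommRing K] {n : ℕ}

/-- `h` has coefficients `[h, x^j y^k]` of total degree at most `j`. -/
def GoodXY (h : Polynomial (PowerSeries (MvPolynomial (Fin n) K))) : Prop :=
  ∀ j k : ℕ, (coeffXY h j k).totalDegree ≤ j

lemma coeffXY_mul (a b : Polynomial (PowerSeries (MvPolynomial (Fin n) K))) (j k : ℕ) :
    coeffXY (a * b) j k =
      ∑ p ∈ Finset.HasAntidiagonal.antidiagonal k, ∑ q ∈ Finset.HasAntidiagonal.antidiagonal j,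
        coeffXY a q.1 p.1 * coeffXY b q.2 p.2 := by
  unfold coeffXY
  rw [Polynomial.coeff_mul, map_sum]
  refine Finset.sum_congr rfl fun p _ => ?_
  rw [PowerSeries.coeff_mul]

lemma GoodXY.mul {a b : Polynomial (PowerSeries (MvPolynomial (Fin n) K))}
    (ha : GoodXY a) (hb : GoodXY b) : GoodXY (a * b) := by
  intro j k
  rw [coeffXY_mul]
  refine le_trans (MvPolynomial.totalDegree_finset_sum _ _) (Finset.sup_le fun p _ => ?_)
  refine le_trans (MvPolynomial.totalDegree_finset_sum _ _) (Finset.sup_le fun q hq => ?_)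
  have hq' := Finset.HasAntidiagonal.mem_antidiagonal.mp hq
  calc (coeffXY a q.1 p.1 * coeffXY b q.2 p.2).totalDegree
      ≤ (coeffXY a q.1 p.1).totalDegree + (coeffXY b q.2 p.2).totalDegree :=
        MvPolynomial.totalDegree_mul _ _
    _ ≤ q.1 + q.2 := add_le_add (ha _ _) (hb _ _)
    _ = j := hq'

lemma GoodXY.one : GoodXY (1 : Polynomial (PowerSeries (MvPolynomial (Fin n) K))) := by
  intro j k
  unfold coeffXY
  rw [Polynomial.coeff_one]
  split_ifs with h
  · rw [PowerSeries.coeff_one]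
    split_ifs <;> simp
  · simp

lemma GoodXY.prod {ι : Type*} (s : Finset ι)
    (f : ι → Polynomial (PowerSeries (MvPolynomial (Fin n) K)))
    (hf : ∀ i ∈ s, GoodXY (f i)) : GoodXY (∏ i ∈ s, f i) := by
  classical
  induction s using Finset.induction_on with
  | empty => simpa using GoodXY.one
  | @insert a s hx ih =>
    rw [Finset.prod_insert hx]
    exact (hf a (Finset.mem_insert_self a s)).mul
      (ih fun i hi => hf i (Finset.mem_insert_of_mem hi))

lemma totalDegree_coeff_substZX (lam : MvPowerSeries (Fin n) K) (j : ℕ) :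
    ((PowerSeries.coeff j) (substZX lam)).totalDegree ≤ j := by
  unfold substZX
  rw [PowerSeries.coeff_mk]
  refine le_trans (MvPolynomial.totalDegree_finset_sum _ _) (Finset.sup_le fun e he => ?_)
  refine le_trans (MvPolynomial.totalDegree_monomial_le _ _) ?_
  have := (Finset.Nat.mem_antidiagonalTuple.mp he)
  simp only [Finsupp.sum, Finsupp.coe_equivFunOnFinite_symm]
  calc ∑ x ∈ (Finsupp.equivFunOnFinite.symm e).support, e x
      ≤ ∑ x : Fin n, e x := Finset.sum_le_sum_of_subset (Finset.subset_univ _)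
    _ = j := this

lemma GoodXY_g (lam : MvPowerSeries (Fin n) K) :
    GoodXY (Polynomial.X - Polynomial.C (substZX lam)) := by
  intro j k
  unfold coeffXY
  rw [Polynomial.coeff_sub, Polynomial.coeff_X, Polynomial.coeff_C]
  split_ifs with h1 h2 h2
  · exact absurd (h2 ▸ h1) one_ne_zero
  · rw [sub_zero, PowerSeries.coeff_one]
    split_ifs <;> simp
  · rw [zero_sub, map_neg, MvPolynomial.totalDegree_neg]
    exact totalDegree_coeff_substZX lam j
  · simp

lemma coeff_pderivX {A : Type*} [CommRing A]
    (h : Polynomial (PowerSeries A)) (k : ℕ) :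
    (pderivX h).coeff k = PowerSeries.derivativeFun (h.coeff k) := by
  unfold pderivX
  rw [Polynomial.sum_def, Polynomial.finset_sum_coeff]
  simp only [Polynomial.coeff_monomial]
  rcases Classical.em (k ∈ h.support) with hk | hk
  · rw [Finset.sum_eq_single k (fun b _ hb => if_neg hb) (fun h' => absurd hk h'), if_pos rfl]
  · rw [Finset.sum_eq_zero fun b hb => if_neg (fun (hbk : b = k) => hk (hbk ▸ hb))]
    rw [Polynomial.notMem_support_iff.mp hk]
    symm
    ext m
    erw [PowerSeries.coeff_derivativeFun]
    simp

lemma GoodXY.pderivX_bound {h : Polynomial (PowerSeries (MvPolynomial (Fin n) K))}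
    (hh : GoodXY h) (j k : ℕ) : (coeffXY (pderivX h) j k).totalDegree ≤ j + 1 := by
  unfold coeffXY
  rw [coeff_pderivX]; erw [PowerSeries.coeff_derivativeFun]
  calc ((PowerSeries.coeff (j+1)) (h.coeff k) * ((j:MvPolynomial (Fin n) K) + 1)).totalDegree
      ≤ ((PowerSeries.coeff (j+1)) (h.coeff k)).totalDegree
          + ((j:MvPolynomial (Fin n) K) + 1).totalDegree := MvPolynomial.totalDegree_mul _ _
    _ ≤ (j + 1) + 0 := by
        refine add_le_add (hh (j+1) k) ?_
        have : ((j:MvPolynomial (Fin n) K) + 1) = MvPolynomial.C ((j:K) + 1) := by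
          rw [map_add, map_natCast, map_one]
        rw [this, MvPolynomial.totalDegree_C]
    _ = j + 1 := by omega

end Aux

/-- **Degree bounds for the entries of Lecerf's linear system.**
Let `K` be a field, `n ≥ 1`, `d ≥ 1`, and let `λ₁,…,λ_d ∈ K[[x₁,…,xₙ]]` be formal power
series. For `i ∈ [d]` let `μᵢ ∈ K[z₁,…,zₙ][[x]]` be obtained from `λᵢ` by substituting
`zⱼ·x` for `xⱼ`, let `gᵢ = y − μᵢ ∈ K[z₁,…,zₙ][[x]][y]`, and let `ĝᵢ = ∏_{j≠i} gⱼ`.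
Then for all `i ∈ [d]` and `(j,k) ∈ ℕ²`, the coefficient of `x^j y^k` in
`ĝᵢ·(∂gᵢ/∂x)` is a polynomial in `K[z₁,…,zₙ]` of total degree at most `j+1`, and the
coefficient of `x^j y^k` in `ĝᵢ·(∂gᵢ/∂y)` has total degree at most `j`. -/
theorem lecerf_system_degree_bounds
    (K : Type) [Field K] (n d : ℕ) (hn : 1 ≤ n) (hd : 1 ≤ d)
    (lam : Fin d → MvPowerSeries (Fin n) K)
    (g : Fin d → Polynomial (PowerSeries (MvPolynomial (Fin n) K)))
    (hg : ∀ i, g i = Polynomial.X - Polynomial.C (substZX (lam i)))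
    (ghat : Fin d → Polynomial (PowerSeries (MvPolynomial (Fin n) K)))
    (hghat : ∀ i, ghat i = ∏ j ∈ Finset.univ.erase i, g j) :
    ∀ (i : Fin d) (j k : ℕ),
      (coeffXY (ghat i * pderivX (g i)) j k).totalDegree ≤ j + 1 ∧
      (coeffXY (ghat i * Polynomial.derivative (g i)) j k).totalDegree ≤ j := by
  intro i j k
  have hgood : ∀ i, GoodXY (g i) := fun i => (hg i) ▸ GoodXY_g (lam i)
  have hghat' : GoodXY (ghat i) := by
    rw [hghat i]
    exact GoodXY.prod _ _ fun a _ => hgood a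
  constructor
  · rw [coeffXY_mul]
    refine le_trans (MvPolynomial.totalDegree_finset_sum _ _) (Finset.sup_le fun p _ => ?_)
    refine le_trans (MvPolynomial.totalDegree_finset_sum _ _) (Finset.sup_le fun q hq => ?_)
    have hq' := Finset.HasAntidiagonal.mem_antidiagonal.mp hq
    calc (coeffXY (ghat i) q.1 p.1 * coeffXY (pderivX (g i)) q.2 p.2).totalDegree
        ≤ (coeffXY (ghat i) q.1 p.1).totalDegree
            + (coeffXY (pderivX (g i)) q.2 p.2).totalDegree :=
          MvPolynomial.totalDegree_mul _ _
      _ ≤ q.1 + (q.2 + 1) := add_le_add (hghat' _ _) ((hgood i).pderivX_bound _ _)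
      _ = j + 1 := by omega
  · have hderiv : Polynomial.derivative (g i) = 1 := by
      rw [hg i]; simp
    rw [hderiv, mul_one]
    exact hghat' j k
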